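/- Let p > 3 be prime, b ∈ F_p, and c ∈ F_p nonzero. For S_λ = Σ_{x ∈ F_p} σ(x³ + λ x² + b x + c), the variance of (S_λ)_{λ∈F_p} equals p − 1 − n₃ − 1/p + Σ_{x ∈ F_p} σ(4 c x³ + (b x + c)²), where n₃ is the number of x ∈ F_p with x³ − b x − 2c = 0. -/

import Mathlib

open Finset

section Aux

variable {p : ℕ} [Fact p.Prime]

lemma aux_lin_sum (hp2 : ringChar (ZMod p) ≠ 2) {a : ZMod p} (ha : a ≠ 0) (d : ZMod p) :
    ∑ l : ZMod p, quadraticChar (ZMod p) (a * l + d) = 0 := by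
  have e : ZMod p ≃ ZMod p := (Equiv.mulLeft₀ a ha).trans (Equiv.addRight d)
  calc ∑ l : ZMod p, quadraticChar (ZMod p) (a * l + d)
      = ∑ l : ZMod p, quadraticChar (ZMod p) (((Equiv.mulLeft₀ a ha).trans (Equiv.addRight d)) l) := by
        apply Finset.sum_congr rfl; intro l _; rfl
    _ = ∑ t : ZMod p, quadraticChar (ZMod p) t := Equiv.sum_comp _ _
    _ = 0 := quadraticChar_sum_zero hp2

lemma aux_sq_sum (hp2 : ringChar (ZMod p) ≠ 2) (A : ZMod p) :
    ∑ l : ZMod p, quadraticChar (ZMod p) ((l + A) * (l + A)) = (p : ℤ) - 1 := by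
  calc ∑ l : ZMod p, quadraticChar (ZMod p) ((l + A) * (l + A))
      = ∑ m : ZMod p, quadraticChar (ZMod p) (m * m) := Fintype.sum_equiv (Equiv.addRight A) _ _ (fun l => rfl)
    _ = ∑ m : ZMod p, (if m = 0 then 0 else 1 : ℤ) := by
        apply Finset.sum_congr rfl; intro m _
        by_cases hm : m = 0
        · simp [hm]
        · rw [← sq, quadraticChar_sq_one' hm]; simp [hm]
    _ = (p : ℤ) - 1 := by
        rw [Finset.sum_ite, Finset.sum_const, Finset.sum_const]
        simp only [Finset.filter_eq', Finset.filter_ne', Finset.mem_univ, if_true,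
          Finset.card_singleton, smul_zero, Finset.card_erase_of_mem, Finset.card_univ, ZMod.card,
          nsmul_eq_mul, mul_one, zero_add]
        rw [Nat.cast_sub (Fact.out : p.Prime).one_lt.le]; simp

end Aux

section Aux2
variable {p : ℕ} [Fact p.Prime]

lemma aux_cross_sum (hp2 : ringChar (ZMod p) ≠ 2) {d : ZMod p} (hd : d ≠ 0) :
    ∑ m : ZMod p, quadraticChar (ZMod p) (m * (m + d)) = -1 := by
  have h0 : ∑ m : ZMod p, quadraticChar (ZMod p) (m * (m + d))
      = ∑ m ∈ (univ : Finset (ZMod p)) \ {0}, quadraticChar (ZMod p) (m * (m + d)) := by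
    rw [Finset.sum_sdiff_eq_sub (Finset.subset_univ _)]
    simp
  rw [h0]
  have h1 : ∀ m ∈ (univ : Finset (ZMod p)) \ {0},
      quadraticChar (ZMod p) (m * (m + d)) = quadraticChar (ZMod p) (1 + d * m⁻¹) := by
    intro m hm
    rw [Finset.mem_sdiff, Finset.mem_singleton] at hm
    have hm0 : m ≠ 0 := hm.2
    have : m * (m + d) = m ^ 2 * (1 + d * m⁻¹) := by
      field_simp
    rw [this, map_mul, quadraticChar_sq_one' hm0, one_mul]
  rw [Finset.sum_congr rfl h1]
  have h2 : ∑ m ∈ (univ : Finset (ZMod p)) \ {0}, quadraticChar (ZMod p) (1 + d * m⁻¹)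
      = ∑ t ∈ (univ : Finset (ZMod p)) \ {1}, quadraticChar (ZMod p) t := by
    apply Finset.sum_nbij' (fun m => 1 + d * m⁻¹) (fun t => d * (t - 1)⁻¹)
    · intro m hm
      rw [Finset.mem_sdiff, Finset.mem_singleton] at hm ⊢
      refine ⟨Finset.mem_univ _, ?_⟩
      intro h
      have : d * m⁻¹ = 0 := by linear_combination h
      rcases mul_eq_zero.1 this with h' | h'
      · exact hd h'
      · exact hm.2 (inv_eq_zero.1 h')
    · intro t ht
      rw [Finset.mem_sdiff, Finset.mem_singleton] at ht ⊢
      refine ⟨Finset.mem_univ _, ?_⟩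
      have ht1 : t - 1 ≠ 0 := sub_ne_zero.2 ht.2
      exact mul_ne_zero hd (inv_ne_zero ht1)
    · intro m hm
      rw [Finset.mem_sdiff, Finset.mem_singleton] at hm
      have hm0 : m ≠ 0 := hm.2
      field_simp
      simp [hd]
    · intro t ht
      rw [Finset.mem_sdiff, Finset.mem_singleton] at ht
      have ht1 : t - 1 ≠ 0 := sub_ne_zero.2 ht.2
      field_simp
      ring
    · intro m _; rfl
  rw [h2, Finset.sum_sdiff_eq_sub (Finset.subset_univ _), quadraticChar_sum_zero hp2]
  simp

end Aux2

section Aux3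
variable {p : ℕ} [Fact p.Prime]

lemma aux_quad_lam_sum (hp2 : ringChar (ZMod p) ≠ 2) (A B : ZMod p) :
    ∑ l : ZMod p, quadraticChar (ZMod p) ((l + A) * (l + B))
      = if A = B then (p : ℤ) - 1 else -1 := by
  by_cases hAB : A = B
  · rw [if_pos hAB, hAB]; exact aux_sq_sum hp2 B
  · rw [if_neg hAB]
    have hd : B - A ≠ 0 := sub_ne_zero.2 (Ne.symm hAB)
    calc ∑ l : ZMod p, quadraticChar (ZMod p) ((l + A) * (l + B))
        = ∑ m : ZMod p, quadraticChar (ZMod p) (m * (m + (B - A))) := by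
          apply Fintype.sum_equiv (Equiv.addRight A)
          intro l
          have he : (Equiv.addRight A) l = l + A := rfl
          rw [he]
          congr 1
          ring
      _ = -1 := aux_cross_sum hp2 hd

lemma aux_quad_count (hp2 : ringChar (ZMod p) ≠ 2) {a : ZMod p} (ha : a ≠ 0) (B C : ZMod p) :
    ((Finset.univ.filter fun y : ZMod p => a * y ^ 2 + B * y + C = 0).card : ℤ)
      = 1 + quadraticChar (ZMod p) (B ^ 2 - 4 * a * C) := by
  have h2 : (2 : ZMod p) ≠ 0 := Ring.two_ne_zero hp2
  have h2a : 2 * a ≠ 0 := mul_ne_zero h2 ha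
  have h4a : (4 : ZMod p) * a ≠ 0 := by
    have : (4 : ZMod p) = 2 * 2 := by norm_num
    rw [this, mul_assoc]; exact mul_ne_zero h2 h2a
  have hcard : (Finset.univ.filter fun y : ZMod p => a * y ^ 2 + B * y + C = 0).card
      = (Finset.univ.filter fun z : ZMod p => z ^ 2 = B ^ 2 - 4 * a * C).card := by
    apply Finset.card_nbij' (fun y => 2 * a * y + B) (fun z => (z - B) / (2 * a))
    · intro y hy
      rw [Finset.mem_coe, Finset.mem_filter] at hy ⊢
      refine ⟨Finset.mem_univ _, ?_⟩
      linear_combination (4 * a) * hy.2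
    · intro z hz
      rw [Finset.mem_coe, Finset.mem_filter] at hz ⊢
      refine ⟨Finset.mem_univ _, ?_⟩
      have hz2 := hz.2
      field_simp
      linear_combination hz2
    · intro y hy
      field_simp
      ring
    · intro z hz
      field_simp
      ring
  rw [hcard]
  have := quadraticChar_card_sqrts hp2 (B ^ 2 - 4 * a * C)
  rw [show ({x : ZMod p | x ^ 2 = B ^ 2 - 4 * a * C} : Set (ZMod p)).toFinset
    = Finset.univ.filter (fun z : ZMod p => z ^ 2 = B ^ 2 - 4 * a * C) from by
      ext z; simp [Set.mem_toFinset]] at this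
  omega

end Aux3

lemma aux_S2 {p : ℕ} [Fact p.Prime] (hp2 : ringChar (ZMod p) ≠ 2) (b c : ZMod p) (hc : c ≠ 0) :
    (∑ l : ZMod p, (∑ x : ZMod p, quadraticChar (ZMod p) (x ^ 3 + l * x ^ 2 + b * x + c)) ^ 2)
      = (p : ℤ) ^ 2 - 1
        + (p : ℤ) * (∑ x : ZMod p, quadraticChar (ZMod p) (4 * c * x ^ 3 + (b * x + c) ^ 2))
        - (p : ℤ) * ((Finset.univ.filter fun x : ZMod p => x ^ 3 - b * x - 2 * c = 0).card : ℤ) := by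
  classical
  set χ := quadraticChar (ZMod p) with hχdef
  have h2 : (2 : ZMod p) ≠ 0 := Ring.two_ne_zero hp2
  have hp1 : 1 ≤ p := (Fact.out : p.Prime).one_lt.le
  have hχc : χ (c * c) = 1 := by rw [← sq]; exact quadraticChar_sq_one' hc
  set T := ∑ x : ZMod p, χ (4 * c * x ^ 3 + (b * x + c) ^ 2) with hTdef
  set n3 := (Finset.univ.filter fun x : ZMod p => x ^ 3 - b * x - 2 * c = 0).card with hn3def
  set nz : Finset (ZMod p) := Finset.univ \ {0} with hnzdef
  have hmemnz : ∀ x : ZMod p, x ∈ nz ↔ x ≠ 0 := by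
    intro x; rw [hnzdef]; simp
  have hnzcard : (nz.card : ℤ) = (p : ℤ) - 1 := by
    rw [hnzdef, Finset.card_sdiff_of_subset (Finset.subset_univ _)]
    simp only [Finset.card_singleton, Finset.card_univ, ZMod.card]
    rw [Nat.cast_sub hp1]; simp
  -- step 1 : expand square, swap sums
  have step1 : (∑ l : ZMod p, (∑ x : ZMod p, χ (x ^ 3 + l * x ^ 2 + b * x + c)) ^ 2)
      = ∑ x : ZMod p, ∑ y : ZMod p, ∑ l : ZMod p,
          χ (x ^ 3 + l * x ^ 2 + b * x + c) * χ (y ^ 3 + l * y ^ 2 + b * y + c) := by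
    have h1 : ∀ l : ZMod p, (∑ x : ZMod p, χ (x ^ 3 + l * x ^ 2 + b * x + c)) ^ 2
        = ∑ x : ZMod p, ∑ y : ZMod p,
            χ (x ^ 3 + l * x ^ 2 + b * x + c) * χ (y ^ 3 + l * y ^ 2 + b * y + c) := by
      intro l; rw [sq, Fintype.sum_mul_sum]
    rw [Finset.sum_congr rfl fun l _ => h1 l, Finset.sum_comm]
    exact Finset.sum_congr rfl fun x _ => Finset.sum_comm
  rw [step1]
  -- inner sum evaluations
  have hJ0y : ∀ y : ZMod p, y ≠ 0 →
      (∑ l : ZMod p, χ ((0 : ZMod p) ^ 3 + l * (0:ZMod p) ^ 2 + b * 0 + c)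
        * χ (y ^ 3 + l * y ^ 2 + b * y + c)) = 0 := by
    intro y hy
    have h := aux_lin_sum hp2 (pow_ne_zero 2 hy) (y ^ 3 + b * y + c)
    calc (∑ l : ZMod p, χ ((0 : ZMod p) ^ 3 + l * (0:ZMod p) ^ 2 + b * 0 + c)
          * χ (y ^ 3 + l * y ^ 2 + b * y + c))
        = χ c * ∑ l : ZMod p, χ (y ^ 2 * l + (y ^ 3 + b * y + c)) := by
          rw [Finset.mul_sum]
          apply Finset.sum_congr rfl; intro l _
          have e1 : (0 : ZMod p) ^ 3 + l * (0:ZMod p) ^ 2 + b * 0 + c = c := by ring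
          have e2 : y ^ 3 + l * y ^ 2 + b * y + c = y ^ 2 * l + (y ^ 3 + b * y + c) := by ring
          rw [e1, e2]
      _ = 0 := by rw [h, mul_zero]
  have hJx0 : ∀ x : ZMod p, x ≠ 0 →
      (∑ l : ZMod p, χ (x ^ 3 + l * x ^ 2 + b * x + c)
        * χ ((0 : ZMod p) ^ 3 + l * (0:ZMod p) ^ 2 + b * 0 + c)) = 0 := by
    intro x hx
    have h := hJ0y x hx
    rw [← h]
    apply Finset.sum_congr rfl; intro l _; ring
  have hJ00 : (∑ l : ZMod p, χ ((0 : ZMod p) ^ 3 + l * (0:ZMod p) ^ 2 + b * 0 + c)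
      * χ ((0 : ZMod p) ^ 3 + l * (0:ZMod p) ^ 2 + b * 0 + c)) = (p : ℤ) := by
    have e1 : ∀ l : ZMod p, (0 : ZMod p) ^ 3 + l * (0:ZMod p) ^ 2 + b * 0 + c = c := by
      intro l; ring
    calc (∑ l : ZMod p, χ ((0 : ZMod p) ^ 3 + l * (0:ZMod p) ^ 2 + b * 0 + c)
          * χ ((0 : ZMod p) ^ 3 + l * (0:ZMod p) ^ 2 + b * 0 + c))
        = ∑ l : ZMod p, (1 : ℤ) := by
          apply Finset.sum_congr rfl; intro l _
          rw [e1 l, ← map_mul, hχc]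
      _ = (p : ℤ) := by simp [ZMod.card]
  have hJxy : ∀ x y : ZMod p, x ≠ 0 → y ≠ 0 →
      (∑ l : ZMod p, χ (x ^ 3 + l * x ^ 2 + b * x + c) * χ (y ^ 3 + l * y ^ 2 + b * y + c))
        = if x = y ∨ x ^ 2 * y ^ 2 + -(b * x + c) * y + -(c * x) = 0 then (p : ℤ) - 1 else -1 := by
    intro x y hx hy
    have hx2 : (x ^ 2 : ZMod p) ≠ 0 := pow_ne_zero 2 hx
    have hy2 : (y ^ 2 : ZMod p) ≠ 0 := pow_ne_zero 2 hy
    set A := (x ^ 3 + b * x + c) / x ^ 2 with hA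
    set B := (y ^ 3 + b * y + c) / y ^ 2 with hB
    have hfx : ∀ l : ZMod p, x ^ 3 + l * x ^ 2 + b * x + c = x ^ 2 * (l + A) := by
      intro l; rw [hA]; field_simp; ring
    have hfy : ∀ l : ZMod p, y ^ 3 + l * y ^ 2 + b * y + c = y ^ 2 * (l + B) := by
      intro l; rw [hB]; field_simp; ring
    have key : (∑ l : ZMod p, χ (x ^ 3 + l * x ^ 2 + b * x + c) * χ (y ^ 3 + l * y ^ 2 + b * y + c))
        = ∑ l : ZMod p, χ ((l + A) * (l + B)) := by
      apply Finset.sum_congr rfl; intro l _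
      rw [hfx l, hfy l, map_mul, map_mul, quadraticChar_sq_one' hx, quadraticChar_sq_one' hy,
        one_mul, one_mul, ← map_mul]
    rw [key, aux_quad_lam_sum hp2 A B]
    have hcond : (A = B) ↔ (x = y ∨ x ^ 2 * y ^ 2 + -(b * x + c) * y + -(c * x) = 0) := by
      rw [hA, hB, div_eq_div_iff hx2 hy2]
      constructor
      · intro h
        have h' : (x - y) * (x ^ 2 * y ^ 2 + -(b * x + c) * y + -(c * x)) = 0 := by
          linear_combination h
        rcases mul_eq_zero.1 h' with h'' | h''
        · exact Or.inl (sub_eq_zero.1 h'')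
        · exact Or.inr h''
      · rintro (h | h)
        · rw [h]
        · linear_combination (x - y) * h
    rw [if_congr hcond rfl rfl]
  -- split off x = 0 and y = 0
  rw [Finset.sum_eq_sum_sdiff_singleton_add (Finset.mem_univ (0 : ZMod p))]
  have hrow0 : (∑ y : ZMod p, ∑ l : ZMod p,
      χ ((0 : ZMod p) ^ 3 + l * (0:ZMod p) ^ 2 + b * 0 + c) * χ (y ^ 3 + l * y ^ 2 + b * y + c))
      = (p : ℤ) := by
    rw [Finset.sum_eq_sum_sdiff_singleton_add (Finset.mem_univ (0 : ZMod p))]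
    have hz : (∑ y ∈ nz, ∑ l : ZMod p,
        χ ((0 : ZMod p) ^ 3 + l * (0:ZMod p) ^ 2 + b * 0 + c) * χ (y ^ 3 + l * y ^ 2 + b * y + c)) = 0 := by
      apply Finset.sum_eq_zero
      intro y hy
      exact hJ0y y ((hmemnz y).1 hy)
    rw [hz, hJ00, zero_add]
  rw [hrow0]
  have hrows : (∑ x ∈ nz, ∑ y : ZMod p, ∑ l : ZMod p,
      χ (x ^ 3 + l * x ^ 2 + b * x + c) * χ (y ^ 3 + l * y ^ 2 + b * y + c))
      = ∑ x ∈ nz, ∑ y ∈ nz,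
          (if x = y ∨ x ^ 2 * y ^ 2 + -(b * x + c) * y + -(c * x) = 0 then (p : ℤ) - 1 else -1) := by
    apply Finset.sum_congr rfl
    intro x hx
    have hx0 : x ≠ 0 := (hmemnz x).1 hx
    rw [Finset.sum_eq_sum_sdiff_singleton_add (Finset.mem_univ (0 : ZMod p)), hJx0 x hx0, add_zero]
    apply Finset.sum_congr rfl
    intro y hy
    exact hJxy x y hx0 ((hmemnz y).1 hy)
  rw [hrows]
  -- now the counting
  have hsplit : ∀ x ∈ nz, ∀ y ∈ nz,
      (if x = y ∨ x ^ 2 * y ^ 2 + -(b * x + c) * y + -(c * x) = 0 then (p : ℤ) - 1 else -1)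
        = (p : ℤ) * ((if x = y then (1:ℤ) else 0) + (if x ^ 2 * y ^ 2 + -(b * x + c) * y + -(c * x) = 0 then (1:ℤ) else 0)
            - (if x = y ∧ x ^ 2 * y ^ 2 + -(b * x + c) * y + -(c * x) = 0 then (1:ℤ) else 0)) - 1 := by
    intro x _ y _
    by_cases h1 : x = y
    · by_cases hq : x ^ 2 * y ^ 2 + -(b * x + c) * y + -(c * x) = 0
      · rw [if_pos (Or.inl h1), if_pos h1, if_pos hq, if_pos ⟨h1, hq⟩]; ring
      · rw [if_pos (Or.inl h1), if_pos h1, if_neg hq, if_neg (fun h => hq h.2)]; ring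
    · by_cases hq : x ^ 2 * y ^ 2 + -(b * x + c) * y + -(c * x) = 0
      · rw [if_pos (Or.inr hq), if_neg h1, if_pos hq, if_neg (fun h => h1 h.1)]; ring
      · rw [if_neg (by tauto), if_neg h1, if_neg hq, if_neg (fun h => hq h.2)]; ring
  rw [Finset.sum_congr rfl fun x hx => Finset.sum_congr rfl fun y hy => hsplit x hx y hy]
  -- sum A
  have hA : (∑ x ∈ nz, ∑ y ∈ nz, (if x = y then (1:ℤ) else 0)) = (p : ℤ) - 1 := by
    have : ∀ x ∈ nz, (∑ y ∈ nz, (if x = y then (1:ℤ) else 0)) = 1 := by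
      intro x hx
      rw [Finset.sum_ite_eq nz x (fun _ => (1:ℤ))]
      simp [hx]
    rw [Finset.sum_congr rfl this, Finset.sum_const, nsmul_eq_mul, mul_one, hnzcard]
  -- sum B
  have hB : (∑ x ∈ nz, ∑ y ∈ nz,
      (if x ^ 2 * y ^ 2 + -(b * x + c) * y + -(c * x) = 0 then (1:ℤ) else 0))
      = (p : ℤ) - 1 + (T - 1) := by
    have hBx : ∀ x ∈ nz, (∑ y ∈ nz, (if x ^ 2 * y ^ 2 + -(b * x + c) * y + -(c * x) = 0 then (1:ℤ) else 0))
        = 1 + χ (4 * c * x ^ 3 + (b * x + c) ^ 2) := by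
      intro x hx
      have hx0 : x ≠ 0 := (hmemnz x).1 hx
      have hfull : (∑ y : ZMod p, (if x ^ 2 * y ^ 2 + -(b * x + c) * y + -(c * x) = 0 then (1:ℤ) else 0))
          = ∑ y ∈ nz, (if x ^ 2 * y ^ 2 + -(b * x + c) * y + -(c * x) = 0 then (1:ℤ) else 0) := by
        rw [Finset.sum_eq_sum_sdiff_singleton_add (Finset.mem_univ (0 : ZMod p))]
        have h0 : ¬ (x ^ 2 * (0:ZMod p) ^ 2 + -(b * x + c) * 0 + -(c * x) = 0) := by
          intro h
          apply mul_ne_zero hc hx0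
          linear_combination -h
        rw [if_neg h0, add_zero]
      rw [← hfull, Finset.sum_boole]
      have hcount := aux_quad_count hp2 (pow_ne_zero 2 hx0) (-(b * x + c)) (-(c * x))
      rw [hcount, hχdef]
      congr 1
      ring
    rw [Finset.sum_congr rfl hBx, Finset.sum_add_distrib, Finset.sum_const, nsmul_eq_mul, mul_one, hnzcard]
    congr 1
    have hTnz : (∑ x : ZMod p, χ (4 * c * x ^ 3 + (b * x + c) ^ 2))
        = (∑ x ∈ nz, χ (4 * c * x ^ 3 + (b * x + c) ^ 2)) + 1 := by
      rw [Finset.sum_eq_sum_sdiff_singleton_add (Finset.mem_univ (0 : ZMod p))]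
      congr 1
      have e : 4 * c * (0:ZMod p) ^ 3 + (b * 0 + c) ^ 2 = c * c := by ring
      rw [e, hχc]
    rw [hTdef, hTnz]
    ring
  -- sum C
  have hC : (∑ x ∈ nz, ∑ y ∈ nz,
      (if x = y ∧ x ^ 2 * y ^ 2 + -(b * x + c) * y + -(c * x) = 0 then (1:ℤ) else 0)) = (n3 : ℤ) := by
    have hCx : ∀ x ∈ nz, (∑ y ∈ nz,
        (if x = y ∧ x ^ 2 * y ^ 2 + -(b * x + c) * y + -(c * x) = 0 then (1:ℤ) else 0))
        = if x ^ 3 - b * x - 2 * c = 0 then (1:ℤ) else 0 := by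
      intro x hx
      have hx0 : x ≠ 0 := (hmemnz x).1 hx
      rw [Finset.sum_eq_single_of_mem x hx]
      · have hiff : (x = x ∧ x ^ 2 * x ^ 2 + -(b * x + c) * x + -(c * x) = 0) ↔ (x ^ 3 - b * x - 2 * c = 0) := by
          constructor
          · rintro ⟨-, h⟩
            have h' : x * (x ^ 3 - b * x - 2 * c) = 0 := by linear_combination h
            rcases mul_eq_zero.1 h' with h'' | h''
            · exact absurd h'' hx0
            · exact h''
          · intro h
            exact ⟨rfl, by linear_combination x * h⟩
        rw [if_congr hiff rfl rfl]
      · intro y _ hyx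
        rw [if_neg]
        rintro ⟨h, -⟩
        exact hyx (h.symm)
    rw [Finset.sum_congr rfl hCx]
    have hfull : (∑ x : ZMod p, (if x ^ 3 - b * x - 2 * c = 0 then (1:ℤ) else 0))
        = ∑ x ∈ nz, (if x ^ 3 - b * x - 2 * c = 0 then (1:ℤ) else 0) := by
      rw [Finset.sum_eq_sum_sdiff_singleton_add (Finset.mem_univ (0 : ZMod p))]
      have h0 : ¬ ((0:ZMod p) ^ 3 - b * 0 - 2 * c = 0) := by
        intro h
        apply mul_ne_zero h2 hc
        linear_combination -h
      rw [if_neg h0, add_zero]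
    rw [← hfull, Finset.sum_boole, hn3def]
  -- assemble
  have distrib : (∑ x ∈ nz, ∑ y ∈ nz,
      ((p : ℤ) * ((if x = y then (1:ℤ) else 0) + (if x ^ 2 * y ^ 2 + -(b * x + c) * y + -(c * x) = 0 then (1:ℤ) else 0)
        - (if x = y ∧ x ^ 2 * y ^ 2 + -(b * x + c) * y + -(c * x) = 0 then (1:ℤ) else 0)) - 1))
      = (p : ℤ) * (((p : ℤ) - 1) + ((p : ℤ) - 1 + (T - 1)) - (n3 : ℤ)) - ((p:ℤ) - 1) * ((p:ℤ) - 1) := by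
    have expand : ∀ x ∈ nz, (∑ y ∈ nz,
        ((p : ℤ) * ((if x = y then (1:ℤ) else 0) + (if x ^ 2 * y ^ 2 + -(b * x + c) * y + -(c * x) = 0 then (1:ℤ) else 0)
          - (if x = y ∧ x ^ 2 * y ^ 2 + -(b * x + c) * y + -(c * x) = 0 then (1:ℤ) else 0)) - 1))
        = (p : ℤ) * ((∑ y ∈ nz, (if x = y then (1:ℤ) else 0))
            + (∑ y ∈ nz, (if x ^ 2 * y ^ 2 + -(b * x + c) * y + -(c * x) = 0 then (1:ℤ) else 0))
            - (∑ y ∈ nz, (if x = y ∧ x ^ 2 * y ^ 2 + -(b * x + c) * y + -(c * x) = 0 then (1:ℤ) else 0)))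
          - ((p:ℤ) - 1) := by
      intro x _
      simp only [Finset.sum_sub_distrib, Finset.sum_add_distrib, ← Finset.mul_sum,
        Finset.sum_const, nsmul_eq_mul, mul_one, hnzcard]
    rw [Finset.sum_congr rfl expand]
    simp only [Finset.sum_sub_distrib, Finset.sum_add_distrib, ← Finset.mul_sum,
      Finset.sum_const, nsmul_eq_mul, mul_one, hnzcard]
    rw [hA, hB, hC]
    ring
  rw [distrib]
  ring

theorem stmt9 (p : ℕ) [Fact p.Prime] (hp : 3 < p) (b c : ZMod p) (hc : c ≠ 0) :
    ((((∑ l : ZMod p, (∑ x : ZMod p, quadraticChar (ZMod p) (x ^ 3 + l * x ^ 2 + b * x + c)) ^ 2) : ℤ) : ℚ) / p) -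
      ((((∑ l : ZMod p, ∑ x : ZMod p, quadraticChar (ZMod p) (x ^ 3 + l * x ^ 2 + b * x + c)) : ℤ) : ℚ) / p) ^ 2
      = p - 1
        - ((Finset.univ.filter fun x : ZMod p => x ^ 3 - b * x - 2 * c = 0).card : ℚ)
        - 1 / p
        + ((∑ x : ZMod p, quadraticChar (ZMod p) (4 * c * x ^ 3 + (b * x + c) ^ 2) : ℤ) : ℚ) := by
  classical
  have hpp : p.Prime := Fact.out
  have hp2 : ringChar (ZMod p) ≠ 2 := by
    rw [ZMod.ringChar_zmod_n]; omega
  have h2 : (2 : ZMod p) ≠ 0 := Ring.two_ne_zero hp2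
  set χ := quadraticChar (ZMod p) with hχdef
  have hχc : χ (c * c) = 1 := by rw [← sq]; exact quadraticChar_sq_one' hc
  -- Part 1
  have hS1 : (∑ l : ZMod p, ∑ x : ZMod p, χ (x ^ 3 + l * x ^ 2 + b * x + c)) = (p : ℤ) * χ c := by
    rw [Finset.sum_comm]
    have hrow : ∀ x : ZMod p, (∑ l : ZMod p, χ (x ^ 3 + l * x ^ 2 + b * x + c))
        = if x = 0 then (p : ℤ) * χ c else 0 := by
      intro x
      by_cases hx : x = 0
      · rw [if_pos hx, hx]
        simp [Finset.sum_const, ZMod.card, mul_comm]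
      · rw [if_neg hx]
        have h := aux_lin_sum hp2 (pow_ne_zero 2 hx) (x ^ 3 + b * x + c)
        rw [← h]
        apply Finset.sum_congr rfl; intro l _
        congr 1; ring
    rw [Finset.sum_congr rfl fun x _ => hrow x]
    simp
  set T := ∑ x : ZMod p, χ (4 * c * x ^ 3 + (b * x + c) ^ 2) with hTdef
  set n3 := (Finset.univ.filter fun x : ZMod p => x ^ 3 - b * x - 2 * c = 0).card with hn3def
  have hS2 : (∑ l : ZMod p, (∑ x : ZMod p, χ (x ^ 3 + l * x ^ 2 + b * x + c)) ^ 2)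
      = (p : ℤ) ^ 2 - 1 + p * T - p * n3 := aux_S2 hp2 b c hc
  rw [hS1, hS2]
  have hχc2 : ((χ c : ℤ) : ℚ) ^ 2 = 1 := by
    exact_mod_cast congrArg (Int.cast : ℤ → ℚ) (quadraticChar_sq_one hc)
  have hp0 : (p : ℚ) ≠ 0 := by
    exact_mod_cast hpp.ne_zero
  push_cast
  field_simp
  linear_combination (-(p : ℚ)) * hχc2
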